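/- arXiv:2510.25854 — 3 statements merged into one kernel-verified Lean document; each statement's English description precedes it below -/
import Mathlib

section
/- Let n ≥ 3 and let U₁, …, Uₙ be single-qubit unitaries, each belonging to the one-qubit Clifford group 𝒞₁. If the n-qubit unitary U₁⊗U₂⊗⋯⊗Uₙ maps every GHZ-basis state to a unit-scalar multiple of a GHZ-basis state, then for each i there exist kᵢ ∈ {0,1}, a single-qubit Pauli matrix Qᵢ ∈ {I,X,Y,Z}, and a unit complex scalar λᵢ such that Uᵢ = λᵢ Qᵢ S^{kᵢ}. In words: up to phase and Pauli factors, the only single-qubit gate that can appear in a GHZ-preserving tensor product of single-qubit gates is the phase gate S. -/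
noncomputable section

/-- The state space of a register of qubits indexed by `ι`: `(ℂ²)^{⊗ι}`. -/
abbrev QState (ι : Type) : Type := (ι → Fin 2) → ℂ

/-- Operators (matrices) on the state space of qubits indexed by `ι`. -/
abbrev QOp (ι : Type) : Type := Matrix (ι → Fin 2) (ι → Fin 2) ℂ

def pI : Matrix (Fin 2) (Fin 2) ℂ := 1

def pX : Matrix (Fin 2) (Fin 2) ℂ := !![0, 1; 1, 0]

def pY : Matrix (Fin 2) (Fin 2) ℂ := !![0, -Complex.I; Complex.I, 0]

def pZ : Matrix (Fin 2) (Fin 2) ℂ := !![1, 0; 0, -1]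

/-- The single-qubit phase gate `S = diag(1, i)`. -/
def sGate : Matrix (Fin 2) (Fin 2) ℂ := !![1, 0; 0, Complex.I]

def pauliSet : Set (Matrix (Fin 2) (Fin 2) ℂ) := {pI, pX, pY, pZ}

/-- The `n`-qubit GHZ state `(|0…0⟩ + |1…1⟩)/√2`. -/
def ghz (n : ℕ) : QState (Fin n) := fun f =>
  (Real.sqrt 2 : ℂ)⁻¹ *
    ((if f = (fun _ => (0 : Fin 2)) then 1 else 0) +
     (if f = (fun _ => (1 : Fin 2)) then 1 else 0))

/-- A single-qubit operator embedded at position `k` (identity elsewhere). -/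
def embed1 {ι : Type} [Fintype ι] [DecidableEq ι] (k : ι)
    (A : Matrix (Fin 2) (Fin 2) ℂ) : QOp ι := fun f g =>
  A (f k) (g k) * ∏ i ∈ Finset.univ.erase k, (if f i = g i then (1 : ℂ) else 0)

/-- Kronecker product of a family of single-qubit operators. -/
def kron {ι : Type} [Fintype ι] (P : ι → Matrix (Fin 2) (Fin 2) ℂ) : QOp ι :=
  fun f g => ∏ i, P i (f i) (g i)

/-- `M` is a Pauli string: a Kronecker product of Pauli matrices. -/
def IsPauliString {ι : Type} [Fintype ι] (M : QOp ι) : Prop :=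
  ∃ P : ι → Matrix (Fin 2) (Fin 2) ℂ, (∀ i, P i ∈ pauliSet) ∧ M = kron P

/-- `v` is a GHZ-basis state: the image of the GHZ state under a Pauli string. -/
def IsGHZBasis {n : ℕ} (v : QState (Fin n)) : Prop :=
  ∃ M : QOp (Fin n), IsPauliString M ∧ v = M.mulVec (ghz n)

/-- Inner product. -/
def qinner {ι : Type} [Fintype ι] [DecidableEq ι] (u v : QState ι) : ℂ :=
  ∑ f, star (u f) * v f

/-- Tensor product of two states of an `n`-qubit register, giving a state of the
`2n`-qubit system (copy 1 indexed by `Sum.inl`, copy 2 by `Sum.inr`). -/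
def tensor2 {n : ℕ} (u v : QState (Fin n)) : QState (Fin n ⊕ Fin n) :=
  fun f => u (fun i => f (Sum.inl i)) * v (fun i => f (Sum.inr i))

/-- A `2n`-qubit operator is GHZ-preserving if it maps any tensor product of two
GHZ-basis states to a unit scalar multiple of a tensor product of GHZ-basis states. -/
def GHZPreserving2 {n : ℕ} (U : QOp (Fin n ⊕ Fin n)) : Prop :=
  ∀ u v : QState (Fin n), IsGHZBasis u → IsGHZBasis v →
    ∃ u' v' : QState (Fin n), IsGHZBasis u' ∧ IsGHZBasis v' ∧
      ∃ lam : ℂ, ‖lam‖ = 1 ∧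
        U.mulVec (tensor2 u v) = lam • tensor2 u' v'

/-- Controlled-Z gate between qubits `p` and `q` (identity elsewhere). -/
def czMat {ι : Type} [Fintype ι] [DecidableEq ι] (p q : ι) : QOp ι :=
  Matrix.diagonal fun f => if f p = 1 ∧ f q = 1 then (-1 : ℂ) else 1

/-- Phase gate `S` on qubit `p` (identity elsewhere). -/
def sMat {ι : Type} [Fintype ι] [DecidableEq ι] (p : ι) : QOp ι :=
  Matrix.diagonal fun f => if f p = 1 then Complex.I else 1

/-- B-generator `CZ_{i,n+i} · CZ_{j,n+j}` on the two-copy system. -/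
def bCZ {n : ℕ} (i j : Fin n) : QOp (Fin n ⊕ Fin n) :=
  czMat (Sum.inl i : Fin n ⊕ Fin n) (Sum.inr i) *
    czMat (Sum.inl j : Fin n ⊕ Fin n) (Sum.inr j)

/-- B-generator `S_i · S_j` (phase gates on copy 1). -/
def bS₁ {n : ℕ} (i j : Fin n) : QOp (Fin n ⊕ Fin n) :=
  sMat (Sum.inl i : Fin n ⊕ Fin n) * sMat (Sum.inl j : Fin n ⊕ Fin n)

/-- B-generator `S_{n+i} · S_{n+j}` (phase gates on copy 2). -/
def bS₂ {n : ℕ} (i j : Fin n) : QOp (Fin n ⊕ Fin n) :=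
  sMat (Sum.inr i : Fin n ⊕ Fin n) * sMat (Sum.inr j : Fin n ⊕ Fin n)

/-- H-generator `C₁ = ∏_{i=1}^n CNOT_{i → n+i}` (controls on copy 1, targets on copy 2). -/
def hC₁ (n : ℕ) : QOp (Fin n ⊕ Fin n) := fun f g =>
  if f = Sum.elim (fun i => g (Sum.inl i)) (fun i => g (Sum.inr i) + g (Sum.inl i))
  then 1 else 0

/-- H-generator `C₂ = ∏_{i=1}^n CNOT_{n+i → i}` (controls on copy 2, targets on copy 1). -/
def hC₂ (n : ℕ) : QOp (Fin n ⊕ Fin n) := fun f g =>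
  if f = Sum.elim (fun i => g (Sum.inl i) + g (Sum.inr i)) (fun i => g (Sum.inr i))
  then 1 else 0


/-- The single-qubit Pauli group: matrices `λP` with `λ ∈ {1,-1,i,-i}`, `P` Pauli. -/
def Pauli1Set : Set (Matrix (Fin 2) (Fin 2) ℂ) :=
  {M | ∃ lam : ℂ, lam ∈ ({1, -1, Complex.I, -Complex.I} : Set ℂ) ∧
    ∃ P ∈ pauliSet, M = lam • P}

/-- Membership in the one-qubit Clifford group `𝒞₁`: a unitary whose conjugation
action maps the Pauli group onto itself. -/
def IsClifford1 (A : Matrix (Fin 2) (Fin 2) ℂ) : Prop :=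
  A ∈ Matrix.unitaryGroup (Fin 2) ℂ ∧ (fun M => A * M * A⁻¹) '' Pauli1Set = Pauli1Set

section Helpers

open Matrix Finset

lemma sqrt2C_ne : ((Real.sqrt 2 : ℂ))⁻¹ ≠ 0 := by
  apply inv_ne_zero
  exact_mod_cast Complex.ofReal_ne_zero.mpr (Real.sqrt_ne_zero'.mpr (by norm_num))

lemma mulVec_ghz {n : ℕ} (M : QOp (Fin n)) (f : Fin n → Fin 2) :
    M.mulVec (ghz n) f =
      (Real.sqrt 2 : ℂ)⁻¹ * M f (fun _ => 0) + (Real.sqrt 2 : ℂ)⁻¹ * M f (fun _ => 1) := by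
  classical
  have h : ∀ g : Fin n → Fin 2, M f g * ghz n g =
      (if g = (fun _ => 0) then (Real.sqrt 2 : ℂ)⁻¹ * M f g else 0) +
      (if g = (fun _ => 1) then (Real.sqrt 2 : ℂ)⁻¹ * M f g else 0) := by
    intro g
    by_cases h0 : g = (fun _ => 0) <;> by_cases h1 : g = (fun _ => 1) <;>
      simp [ghz, h0, h1] <;> split_ifs <;> ring
  show (∑ g, M f g * ghz n g) = _
  rw [Finset.sum_congr rfl (fun g _ => h g), Finset.sum_add_distrib,
    Finset.sum_ite_eq', Finset.sum_ite_eq']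
  simp

lemma kron_mul {ι : Type} [Fintype ι] [DecidableEq ι] (A B : ι → Matrix (Fin 2) (Fin 2) ℂ) :
    kron A * kron B = kron (fun i => A i * B i) := by
  ext f g
  show (∑ h : ι → Fin 2, (∏ i, A i (f i) (h i)) * ∏ i, B i (h i) (g i)) = ∏ i, (A i * B i) (f i) (g i)
  calc (∑ h : ι → Fin 2, (∏ i, A i (f i) (h i)) * ∏ i, B i (h i) (g i))
      = ∑ h : ι → Fin 2, ∏ i, (A i (f i) (h i) * B i (h i) (g i)) := by
        exact Finset.sum_congr rfl fun h _ => (Finset.prod_mul_distrib).symm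
    _ = ∏ i, ∑ x : Fin 2, A i (f i) x * B i x (g i) := by
        rw [Finset.prod_univ_sum]
        rw [Fintype.piFinset_univ]
    _ = ∏ i, (A i * B i) (f i) (g i) := by
        exact Finset.prod_congr rfl fun i _ => (Matrix.mul_apply).symm

lemma kron_one {ι : Type} [Fintype ι] [DecidableEq ι] :
    kron (fun _ : ι => (1 : Matrix (Fin 2) (Fin 2) ℂ)) = 1 := by
  ext f g
  by_cases h : f = g
  · subst h; simp [kron, Matrix.one_apply]
  · obtain ⟨m, hm⟩ := Function.ne_iff.mp h
    show (∏ i, (1 : Matrix (Fin 2) (Fin 2) ℂ) (f i) (g i)) = (1 : QOp ι) f g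
    rw [Matrix.one_apply_ne h]
    exact Finset.prod_eq_zero (Finset.mem_univ m) (Matrix.one_apply_ne hm)

open Classical in
noncomputable def alphaP (Q : Matrix (Fin 2) (Fin 2) ℂ) : Fin 2 :=
  if Q 0 0 = 0 then 1 else 0

lemma pauli_zero {Q : Matrix (Fin 2) (Fin 2) ℂ} (hQ : Q ∈ pauliSet) :
    ∀ x c : Fin 2, x ≠ c + alphaP Q → Q x c = 0 := by
  have h4 : Q = pI ∨ Q = pX ∨ Q = pY ∨ Q = pZ := by simpa [pauliSet] using hQ
  rcases h4 with rfl | rfl | rfl | rfl <;>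
  · intro x c hx
    fin_cases x <;> fin_cases c <;>
      simp_all [alphaP, pI, pX, pY, pZ, Matrix.one_apply]

lemma pauli_ne_zero {Q : Matrix (Fin 2) (Fin 2) ℂ} (hQ : Q ∈ pauliSet) :
    ∀ c : Fin 2, Q (c + alphaP Q) c ≠ 0 := by
  have h4 : Q = pI ∨ Q = pX ∨ Q = pY ∨ Q = pZ := by simpa [pauliSet] using hQ
  rcases h4 with rfl | rfl | rfl | rfl <;>
  · intro c
    fin_cases c <;>
      simp [alphaP, pI, pX, pY, pZ, Matrix.one_apply, Complex.I_ne_zero]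

lemma mul_pauli_apply {Q : Matrix (Fin 2) (Fin 2) ℂ} (hQ : Q ∈ pauliSet)
    (B : Matrix (Fin 2) (Fin 2) ℂ) (x c : Fin 2) :
    (B * Q) x c = B x (c + alphaP Q) * Q (c + alphaP Q) c := by
  have h1 : ∀ y : Fin 2, y ≠ c + alphaP Q → Q y c = 0 := fun y hy => pauli_zero hQ y c hy
  have h01 : ∀ z : Fin 2, z = 0 ∨ z = 1 := by decide
  rw [Matrix.mul_apply, Fin.sum_univ_two]
  rcases h01 (c + alphaP Q) with h | h <;> rw [h]
  · rw [h1 1 (by simp [h]), mul_zero, add_zero]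
  · rw [h1 0 (by simp [h]), mul_zero, zero_add]

end Helpers
section Endgame
open Matrix Finset Complex

lemma unit4_ne_zero {lam : ℂ} (h : lam ∈ ({1, -1, Complex.I, -Complex.I} : Set ℂ)) : lam ≠ 0 := by
  rcases h with rfl | rfl | rfl | rfl <;> simp [Complex.I_ne_zero]

lemma abs_eq_one_of {a : ℂ} (h : (starRingEnd ℂ) a * a = 1) : ‖a‖ = 1 := by
  have h2 : ‖a‖ * ‖a‖ = 1 := by
    have := congrArg (‖·‖) h
    simpa [norm_mul, Complex.norm_conj] using this
  rcases mul_self_eq_one_iff.mp h2 with h3 | h3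
  · exact h3
  · nlinarith [norm_nonneg a]

lemma diag_case (A : Matrix (Fin 2) (Fin 2) ℂ) (hU : A ∈ Matrix.unitaryGroup (Fin 2) ℂ)
    (hcl : (fun M => A * M * A⁻¹) '' Pauli1Set = Pauli1Set)
    (hb : A 0 1 = 0) (hc : A 1 0 = 0) :
    ∃ k : Fin 2, ∃ Q ∈ pauliSet, ∃ lam : ℂ,
      ‖lam‖ = 1 ∧ A = lam • (Q * sGate ^ (k : ℕ)) := by
  have hinv : A⁻¹ = star A := Matrix.inv_eq_left_inv (Matrix.mem_unitaryGroup_iff'.mp hU)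
  have hpXmem : pX ∈ Pauli1Set := ⟨1, by left; rfl, pX, by simp [pauliSet], (one_smul _ _).symm⟩
  have hB : A * pX * A⁻¹ ∈ Pauli1Set := by
    rw [← hcl]; exact ⟨pX, hpXmem, rfl⟩
  obtain ⟨ν, hν, R, hR, hBeq⟩ := hB
  rw [hinv] at hBeq
  have hB00 : (A * pX * star A) 0 0 = 0 := by
    simp [Matrix.mul_apply, Fin.sum_univ_two, pX, Matrix.star_apply, hb, hc]
  have hB10 : (A * pX * star A) 1 0 = A 1 1 * (starRingEnd ℂ) (A 0 0) := by
    simp [Matrix.mul_apply, Fin.sum_univ_two, pX, Matrix.star_apply, hb, hc]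
  -- R has zero (0,0) entry, so R ∈ {pX, pY}
  have hν0 : ν ≠ 0 := unit4_ne_zero hν
  have hR00 : R 0 0 = 0 := by
    have := congrFun (congrFun hBeq 0) 0
    rw [hB00] at this
    have h2 : ν * R 0 0 = 0 := by simpa [Matrix.smul_apply] using this.symm
    exact (mul_eq_zero.mp h2).resolve_left hν0
  have hRXY : R = pX ∨ R = pY := by
    have h4 : R = pI ∨ R = pX ∨ R = pY ∨ R = pZ := by simpa [pauliSet] using hR
    rcases h4 with rfl | rfl | rfl | rfl
    · exfalso; simp [pI, Matrix.one_apply] at hR00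
    · left; rfl
    · right; rfl
    · exfalso; simp [pZ] at hR00
  -- the ratio w = d * conj a is a fourth root of unity
  have hw := congrFun (congrFun hBeq 1) 0
  rw [hB10] at hw
  have hw4 : A 1 1 * (starRingEnd ℂ) (A 0 0) = 1 ∨ A 1 1 * (starRingEnd ℂ) (A 0 0) = -1 ∨
      A 1 1 * (starRingEnd ℂ) (A 0 0) = Complex.I ∨ A 1 1 * (starRingEnd ℂ) (A 0 0) = -Complex.I := by
    rcases hν with rfl | rfl | rfl | rfl <;> rcases hRXY with rfl | rfl <;>
      simp_all [Matrix.smul_apply, pX, pY] <;> tauto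
  have hstarAA : star A * A = 1 := Matrix.mem_unitaryGroup_iff'.mp hU
  have haa : (starRingEnd ℂ) (A 0 0) * A 0 0 = 1 := by
    have := congrFun (congrFun hstarAA 0) 0
    simpa [Matrix.mul_apply, Fin.sum_univ_two, Matrix.star_apply, Matrix.one_apply, hc] using this
  have habs : ‖A 0 0‖ = 1 := abs_eq_one_of haa
  have hd : ∀ w : ℂ, A 1 1 * (starRingEnd ℂ) (A 0 0) = w → A 1 1 = w * A 0 0 := by
    intro w hw'
    calc A 1 1 = A 1 1 * ((starRingEnd ℂ) (A 0 0) * A 0 0) := by rw [haa, mul_one]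
    _ = (A 1 1 * (starRingEnd ℂ) (A 0 0)) * A 0 0 := by ring
    _ = w * A 0 0 := by rw [hw']
  rcases hw4 with h | h | h | h
  · exact ⟨0, pI, by simp [pauliSet], A 0 0, habs, by
      ext x y; fin_cases x <;> fin_cases y <;>
        simp [pI, sGate, hb, hc, hd _ h, Matrix.smul_apply, Matrix.one_apply,
          Matrix.mul_apply, Fin.sum_univ_two, mul_comm]⟩
  · exact ⟨0, pZ, by simp [pauliSet], A 0 0, habs, by
      ext x y; fin_cases x <;> fin_cases y <;>
        simp [pZ, sGate, hb, hc, hd _ h, Matrix.smul_apply, Matrix.one_apply,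
          Matrix.mul_apply, Fin.sum_univ_two, mul_comm]⟩
  · exact ⟨1, pI, by simp [pauliSet], A 0 0, habs, by
      ext x y; fin_cases x <;> fin_cases y <;>
        simp [pI, sGate, hb, hc, hd _ h, Matrix.smul_apply, Matrix.one_apply,
          Matrix.mul_apply, Fin.sum_univ_two, mul_comm]⟩
  · exact ⟨1, pZ, by simp [pauliSet], A 0 0, habs, by
      ext x y; fin_cases x <;> fin_cases y <;>
        simp [pZ, sGate, hb, hc, hd _ h, Matrix.smul_apply, Matrix.one_apply,
          Matrix.mul_apply, Fin.sum_univ_two, mul_comm]⟩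

lemma antidiag_case (A : Matrix (Fin 2) (Fin 2) ℂ) (hU : A ∈ Matrix.unitaryGroup (Fin 2) ℂ)
    (hcl : (fun M => A * M * A⁻¹) '' Pauli1Set = Pauli1Set)
    (ha : A 0 0 = 0) (hd : A 1 1 = 0) :
    ∃ k : Fin 2, ∃ Q ∈ pauliSet, ∃ lam : ℂ,
      ‖lam‖ = 1 ∧ A = lam • (Q * sGate ^ (k : ℕ)) := by
  have hinv : A⁻¹ = star A := Matrix.inv_eq_left_inv (Matrix.mem_unitaryGroup_iff'.mp hU)
  have hpXmem : pX ∈ Pauli1Set := ⟨1, by left; rfl, pX, by simp [pauliSet], (one_smul _ _).symm⟩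
  have hB : A * pX * A⁻¹ ∈ Pauli1Set := by
    rw [← hcl]; exact ⟨pX, hpXmem, rfl⟩
  obtain ⟨ν, hν, R, hR, hBeq⟩ := hB
  rw [hinv] at hBeq
  have hν0 : ν ≠ 0 := unit4_ne_zero hν
  have hB00 : (A * pX * star A) 0 0 = 0 := by
    simp [Matrix.mul_apply, Fin.sum_univ_two, pX, Matrix.star_apply, ha, hd]
  have hB01 : (A * pX * star A) 0 1 = A 0 1 * (starRingEnd ℂ) (A 1 0) := by
    simp [Matrix.mul_apply, Fin.sum_univ_two, pX, Matrix.star_apply, ha, hd]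
  have hR00 : R 0 0 = 0 := by
    have := congrFun (congrFun hBeq 0) 0
    rw [hB00] at this
    have h2 : ν * R 0 0 = 0 := by simpa [Matrix.smul_apply] using this.symm
    exact (mul_eq_zero.mp h2).resolve_left hν0
  have hRXY : R = pX ∨ R = pY := by
    have h4 : R = pI ∨ R = pX ∨ R = pY ∨ R = pZ := by simpa [pauliSet] using hR
    rcases h4 with rfl | rfl | rfl | rfl
    · exfalso; simp [pI, Matrix.one_apply] at hR00
    · left; rfl
    · right; rfl
    · exfalso; simp [pZ] at hR00
  have hw := congrFun (congrFun hBeq 0) 1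
  rw [hB01] at hw
  have hw4 : A 0 1 * (starRingEnd ℂ) (A 1 0) = 1 ∨ A 0 1 * (starRingEnd ℂ) (A 1 0) = -1 ∨
      A 0 1 * (starRingEnd ℂ) (A 1 0) = Complex.I ∨ A 0 1 * (starRingEnd ℂ) (A 1 0) = -Complex.I := by
    rcases hν with rfl | rfl | rfl | rfl <;> rcases hRXY with rfl | rfl <;>
      simp_all [Matrix.smul_apply, pX, pY]
  have hstarAA : star A * A = 1 := Matrix.mem_unitaryGroup_iff'.mp hU
  have hcc : (starRingEnd ℂ) (A 1 0) * A 1 0 = 1 := by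
    have := congrFun (congrFun hstarAA 0) 0
    simpa [Matrix.mul_apply, Fin.sum_univ_two, Matrix.star_apply, Matrix.one_apply, ha] using this
  have habs : ‖A 1 0‖ = 1 := abs_eq_one_of hcc
  have hbw : ∀ w : ℂ, A 0 1 * (starRingEnd ℂ) (A 1 0) = w → A 0 1 = w * A 1 0 := by
    intro w hw'
    calc A 0 1 = A 0 1 * ((starRingEnd ℂ) (A 1 0) * A 1 0) := by rw [hcc, mul_one]
    _ = (A 0 1 * (starRingEnd ℂ) (A 1 0)) * A 1 0 := by ring
    _ = w * A 1 0 := by rw [hw']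
  have habsIc : ‖-Complex.I * A 1 0‖ = 1 := by
    rw [norm_mul, habs]; simp
  rcases hw4 with h | h | h | h
  · exact ⟨0, pX, by simp [pauliSet], A 1 0, habs, by
      ext x y; fin_cases x <;> fin_cases y <;>
        simp [pX, sGate, ha, hd, hbw _ h, Matrix.smul_apply, Matrix.one_apply,
          Matrix.mul_apply, Fin.sum_univ_two, mul_comm]⟩
  · exact ⟨0, pY, by simp [pauliSet], -Complex.I * A 1 0, habsIc, by
      ext x y; fin_cases x <;> fin_cases y <;>
        simp [pY, sGate, ha, hd, hbw _ h, Matrix.smul_apply, Matrix.one_apply,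
          Matrix.mul_apply, Fin.sum_univ_two] <;> ring_nf <;>
        simp [Complex.I_sq] <;> ring⟩
  · exact ⟨1, pX, by simp [pauliSet], A 1 0, habs, by
      ext x y; fin_cases x <;> fin_cases y <;>
        simp [pX, sGate, ha, hd, hbw _ h, Matrix.smul_apply, Matrix.one_apply,
          Matrix.mul_apply, Fin.sum_univ_two, mul_comm]⟩
  · exact ⟨1, pY, by simp [pauliSet], -Complex.I * A 1 0, habsIc, by
      ext x y; fin_cases x <;> fin_cases y <;>
        simp [pY, sGate, ha, hd, hbw _ h, Matrix.smul_apply, Matrix.one_apply,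
          Matrix.mul_apply, Fin.sum_univ_two] <;> ring_nf <;>
        simp [Complex.I_sq] <;> ring⟩

end Endgame

section Mid
open Matrix Finset Complex

lemma fin2_add_one_ne (x : Fin 2) : x + 1 ≠ x := by fin_cases x <;> decide

lemma fin2_ne_one_add (x : Fin 2) : x ≠ 1 + x := by fin_cases x <;> decide

lemma kronV_ghz {n : ℕ} {i j : Fin n} (hij : i ≠ j) :
    (kron (fun m => if m = i ∨ m = j then pZ else 1)).mulVec (ghz n) = ghz n := by
  classical
  funext f
  rw [mulVec_ghz]
  have hz0 : kron (fun m => if m = i ∨ m = j then pZ else 1) f (fun _ => 0)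
      = if f = (fun _ => 0) then 1 else 0 := by
    simp only [kron]
    by_cases h : f = (fun _ => 0)
    · subst h
      rw [if_pos rfl]
      apply Finset.prod_eq_one
      intro m _
      by_cases hm : m = i ∨ m = j <;> simp [hm, pZ, pI, Matrix.one_apply]
    · rw [if_neg h]
      obtain ⟨m, hm⟩ := Function.ne_iff.mp h
      apply Finset.prod_eq_zero (Finset.mem_univ m)
      have hm1 : f m = 1 := by
        have : ∀ x : Fin 2, x ≠ 0 → x = 1 := by decide
        exact this _ hm
      by_cases hmi : m = i ∨ m = j <;> simp [hmi, hm1, pZ, Matrix.one_apply]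
  have hz1 : kron (fun m => if m = i ∨ m = j then pZ else 1) f (fun _ => 1)
      = if f = (fun _ => 1) then 1 else 0 := by
    simp only [kron]
    by_cases h : f = (fun _ => 1)
    · subst h
      rw [if_pos rfl]
      have hfac : ∀ m : Fin n, (if m = i ∨ m = j then pZ else 1) 1 1
          = (if m = i then (-1 : ℂ) else 1) * (if m = j then (-1 : ℂ) else 1) := by
        intro m
        by_cases hmi : m = i <;> by_cases hmj : m = j <;>
          simp_all [pZ, Matrix.one_apply]
      calc (∏ m, (if m = i ∨ m = j then pZ else 1) ((fun _ => (1 : Fin 2)) m) ((fun _ => (1 : Fin 2)) m))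
          = ∏ m : Fin n, ((if m = i then (-1 : ℂ) else 1) * (if m = j then (-1 : ℂ) else 1)) :=
            Finset.prod_congr rfl fun m _ => hfac m
        _ = (∏ m : Fin n, (if m = i then (-1 : ℂ) else 1)) *
            ∏ m : Fin n, (if m = j then (-1 : ℂ) else 1) := Finset.prod_mul_distrib
        _ = 1 := by
            rw [Finset.prod_ite_eq' Finset.univ i (fun _ => (-1 : ℂ)),
              Finset.prod_ite_eq' Finset.univ j (fun _ => (-1 : ℂ))]
            simp
    · rw [if_neg h]
      obtain ⟨m, hm⟩ := Function.ne_iff.mp h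
      apply Finset.prod_eq_zero (Finset.mem_univ m)
      have hm0 : f m = 0 := by
        have : ∀ x : Fin 2, x ≠ 1 → x = 0 := by decide
        exact this _ hm
      by_cases hmi : m = i ∨ m = j <;> simp [hmi, hm0, pZ, Matrix.one_apply]
  rw [hz0, hz1, ghz]
  by_cases h0 : f = (fun _ => 0) <;> by_cases h1 : f = (fun _ => 1) <;>
    simp [h0, h1] <;> split_ifs <;> ring

lemma final_case (A : Matrix (Fin 2) (Fin 2) ℂ) (hU : A ∈ Matrix.unitaryGroup (Fin 2) ℂ)
    (hcl : (fun M => A * M * A⁻¹) '' Pauli1Set = Pauli1Set)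
    {μ : ℂ} (hμ4 : μ ∈ ({1, -1, Complex.I, -Complex.I} : Set ℂ))
    (hconj : A * pZ * A⁻¹ = μ • pZ) :
    ∃ k : Fin 2, ∃ Q ∈ pauliSet, ∃ lam : ℂ,
      ‖lam‖ = 1 ∧ A = lam • (Q * sGate ^ (k : ℕ)) := by
  have hinv : A⁻¹ = star A := Matrix.inv_eq_left_inv (Matrix.mem_unitaryGroup_iff'.mp hU)
  have h1 : A⁻¹ * A = 1 := by rw [hinv]; exact Matrix.mem_unitaryGroup_iff'.mp hU
  have hAZ : A * pZ = μ • (pZ * A) := by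
    calc A * pZ = A * pZ * (A⁻¹ * A) := by rw [h1, Matrix.mul_one]
    _ = (A * pZ * A⁻¹) * A := by simp only [Matrix.mul_assoc]
    _ = (μ • pZ) * A := by rw [hconj]
    _ = μ • (pZ * A) := Matrix.smul_mul μ pZ A
  have e00 : A 0 0 = μ * A 0 0 := by
    have h2 : (A * pZ) 0 0 = (μ • (pZ * A)) 0 0 := by rw [hAZ]
    simpa [Matrix.mul_apply, Fin.sum_univ_two, pZ, Matrix.smul_apply, Matrix.vecMul,
      dotProduct, Matrix.cons_dotProduct, Matrix.dotProduct_of_isEmpty, Matrix.cons_val_zero,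
      Matrix.cons_val_one, Matrix.head_cons] using h2
  have e01 : -A 0 1 = μ * A 0 1 := by
    have h2 : (A * pZ) 0 1 = (μ • (pZ * A)) 0 1 := by rw [hAZ]
    simpa [Matrix.mul_apply, Fin.sum_univ_two, pZ, Matrix.smul_apply, Matrix.vecMul,
      dotProduct, Matrix.cons_dotProduct, Matrix.dotProduct_of_isEmpty, Matrix.cons_val_zero,
      Matrix.cons_val_one, Matrix.head_cons] using h2
  have e10 : A 1 0 = -(μ * A 1 0) := by
    have h2 : (A * pZ) 1 0 = (μ • (pZ * A)) 1 0 := by rw [hAZ]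
    simpa [Matrix.mul_apply, Fin.sum_univ_two, pZ, Matrix.smul_apply, Matrix.vecMul,
      dotProduct, Matrix.cons_dotProduct, Matrix.dotProduct_of_isEmpty, Matrix.cons_val_zero,
      Matrix.cons_val_one, Matrix.head_cons] using h2
  have e11 : A 1 1 = μ * A 1 1 := by
    have h2 : (A * pZ) 1 1 = (μ • (pZ * A)) 1 1 := by rw [hAZ]
    simpa [Matrix.mul_apply, Fin.sum_univ_two, pZ, Matrix.smul_apply, Matrix.vecMul,
      dotProduct, Matrix.cons_dotProduct, Matrix.dotProduct_of_isEmpty, Matrix.cons_val_zero,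
      Matrix.cons_val_one, Matrix.head_cons] using h2
  have hstarAA : star A * A = 1 := Matrix.mem_unitaryGroup_iff'.mp hU
  have hone := congrFun (congrFun hstarAA 0) 0
  simp only [Matrix.mul_apply, Fin.sum_univ_two, Matrix.star_apply, Matrix.one_apply_eq] at hone
  rcases hμ4 with rfl | rfl | rfl | rfl
  · -- μ = 1 : A is diagonal
    have hb : A 0 1 = 0 := by linear_combination (-1/2 : ℂ) * e01
    have hc : A 1 0 = 0 := by linear_combination (1/2 : ℂ) * e10
    exact diag_case A hU hcl hb hc
  · -- μ = -1 : A is antidiagonal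
    have ha : A 0 0 = 0 := by linear_combination (1/2 : ℂ) * e00
    have hd : A 1 1 = 0 := by linear_combination (1/2 : ℂ) * e11
    exact antidiag_case A hU hcl ha hd
  · -- μ = I : impossible
    exfalso
    have ha : A 0 0 = 0 := by
      have h2 : A 0 0 * (1 - Complex.I) = 0 := by linear_combination e00
      rcases mul_eq_zero.mp h2 with h3 | h3
      · exact h3
      · exfalso
        have := congrArg Complex.re h3
        simp at this
    have hc : A 1 0 = 0 := by
      have h2 : A 1 0 * (1 + Complex.I) = 0 := by linear_combination e10
      rcases mul_eq_zero.mp h2 with h3 | h3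
      · exact h3
      · exfalso
        have := congrArg Complex.im h3
        simp at this
    rw [ha, hc] at hone
    simp at hone
  · -- μ = -I : impossible
    exfalso
    have ha : A 0 0 = 0 := by
      have h2 : A 0 0 * (1 + Complex.I) = 0 := by linear_combination e00
      rcases mul_eq_zero.mp h2 with h3 | h3
      · exact h3
      · exfalso
        have := congrArg Complex.im h3
        simp at this
    have hc : A 1 0 = 0 := by
      have h2 : A 1 0 * (1 - Complex.I) = 0 := by linear_combination e10
      rcases mul_eq_zero.mp h2 with h3 | h3
      · exact h3
      · exfalso
        have := congrArg Complex.re h3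
        simp at this
    rw [ha, hc] at hone
    simp at hone

end Mid
/-- STATEMENT 2: if a tensor product of one-qubit Clifford gates maps every GHZ-basis
state to a unit multiple of a GHZ-basis state, then each factor is, up to a unit
phase and a Pauli factor, a power of the phase gate `S`. -/
theorem stmt2 (n : ℕ) (hn : 3 ≤ n) (U : Fin n → Matrix (Fin 2) (Fin 2) ℂ)
    (hC : ∀ i, IsClifford1 (U i))
    (hpres : ∀ u : QState (Fin n), IsGHZBasis u →
      ∃ u' : QState (Fin n), IsGHZBasis u' ∧ ∃ lam : ℂ, ‖lam‖ = 1 ∧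
        (kron U).mulVec u = lam • u') :
    ∀ i, ∃ k : Fin 2, ∃ Q ∈ pauliSet, ∃ lam : ℂ,
      ‖lam‖ = 1 ∧ U i = lam • (Q * sGate ^ (k : ℕ)) := by
  classical
  intro i
  -- choose auxiliary indices j ≠ i and k ∉ {i, j}
  obtain ⟨j, hj⟩ : ∃ j : Fin n, j ≠ i :=
    Fintype.exists_ne_of_one_lt_card (by rw [Fintype.card_fin]; omega) i
  obtain ⟨k, hki, hkj⟩ : ∃ k : Fin n, k ≠ i ∧ k ≠ j := by
    have hcard : (Finset.univ \ {i, j} : Finset (Fin n)).Nonempty := by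
      apply Finset.card_pos.mp
      rw [Finset.card_sdiff_of_subset (Finset.subset_univ _)]
      have h2 : ({i, j} : Finset (Fin n)).card ≤ 2 :=
        (Finset.card_insert_le _ _).trans (by simp)
      simp only [Finset.card_univ, Fintype.card_fin]
      omega
    obtain ⟨k, hk⟩ := hcard
    rw [Finset.mem_sdiff] at hk
    have := hk.2
    simp only [Finset.mem_insert, Finset.mem_singleton] at this
    push_neg at this
    exact ⟨k, this⟩
  -- unitarity facts
  have hUmem : ∀ m, U m ∈ Matrix.unitaryGroup (Fin 2) ℂ := fun m => (hC m).1
  have hUl : ∀ m, (U m)⁻¹ * U m = 1 := fun m => by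
    rw [Matrix.inv_eq_left_inv (Matrix.mem_unitaryGroup_iff'.mp (hUmem m))]
    exact Matrix.mem_unitaryGroup_iff'.mp (hUmem m)
  have hUr : ∀ m, U m * (U m)⁻¹ = 1 := fun m => by
    rw [Matrix.inv_eq_left_inv (Matrix.mem_unitaryGroup_iff'.mp (hUmem m))]
    exact Matrix.mem_unitaryGroup_iff.mp (hUmem m)
  -- apply the hypothesis to the GHZ state itself
  have hghzB : IsGHZBasis (ghz n) :=
    ⟨1, ⟨fun _ => pI, fun _ => by simp [pauliSet], kron_one.symm⟩, (Matrix.one_mulVec _).symm⟩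
  obtain ⟨u', hu', lam, hlam, heq⟩ := hpres (ghz n) hghzB
  obtain ⟨M', ⟨P', hP', rfl⟩, rfl⟩ := hu'
  -- the conjugated stabilizer fixes the image state
  set V : Fin n → Matrix (Fin 2) (Fin 2) ℂ := fun m => if m = i ∨ m = j then pZ else 1 with hVdef
  set P : Fin n → Matrix (Fin 2) (Fin 2) ℂ := fun m => U m * V m * (U m)⁻¹ with hPdef
  have hPU : kron P * kron U = kron U * kron V := by
    have hfun : (fun m => P m * U m) = fun m => U m * V m := by
      funext m
      calc U m * V m * (U m)⁻¹ * U m = U m * V m * ((U m)⁻¹ * U m) := by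
            simp only [Matrix.mul_assoc]
      _ = U m * V m := by rw [hUl m, Matrix.mul_one]
    rw [kron_mul, kron_mul, hfun]
  have hVg : (kron V).mulVec (ghz n) = ghz n := kronV_ghz (Ne.symm hj)
  have hfix : (kron P).mulVec ((kron U).mulVec (ghz n)) = (kron U).mulVec (ghz n) := by
    rw [Matrix.mulVec_mulVec, hPU, ← Matrix.mulVec_mulVec, hVg]
  have hl0 : lam ≠ 0 := by
    intro h0; rw [h0] at hlam; simp at hlam
  have hfix2 : (kron P).mulVec ((kron P').mulVec (ghz n)) = (kron P').mulVec (ghz n) := by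
    rw [heq, Matrix.mulVec_smul] at hfix
    exact smul_right_injective (QState (Fin n)) hl0 hfix
  -- the conjugates of Z are (scaled) Paulis
  have hpZ1 : pZ ∈ Pauli1Set := ⟨1, by left; rfl, pZ, by simp [pauliSet], (one_smul _ _).symm⟩
  have hconjPauli : ∀ m, U m * pZ * (U m)⁻¹ ∈ Pauli1Set := fun m => by
    rw [← (hC m).2]; exact ⟨pZ, hpZ1, rfl⟩
  have hPieq : P i = U i * pZ * (U i)⁻¹ := by simp [hPdef, hVdef]
  have hPjeq : P j = U j * pZ * (U j)⁻¹ := by simp [hPdef, hVdef]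
  have hPkeq : P k = 1 := by
    have hVk : V k = 1 := by simp [hVdef, hki, hkj]
    show U k * V k * (U k)⁻¹ = 1
    rw [hVk, Matrix.mul_one]; exact hUr k
  obtain ⟨μi, hμi4, Ri, hRi, hRieq⟩ := hconjPauli i
  obtain ⟨μj, hμj4, Rj, hRj, hRjeq⟩ := hconjPauli j
  have hPiR : P i = μi • Ri := by rw [hPieq, hRieq]
  have hPjR : P j = μj • Rj := by rw [hPjeq, hRjeq]
  -- Ri must be pZ
  have hRiZ : Ri = pZ := by
    have h4 : Ri = pI ∨ Ri = pX ∨ Ri = pY ∨ Ri = pZ := by simpa [pauliSet] using hRi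
    have hXY : (Ri = pX ∨ Ri = pY) → False := by
      intro hxy
      have halphai : alphaP Ri = 1 := by
        rcases hxy with rfl | rfl <;> simp [alphaP, pX, pY]
      set a : Fin n → Fin 2 := fun m => alphaP (P' m) with hadef
      set f : Fin n → Fin 2 :=
        fun m => if m = i then a i + 1 else if m = j then a j + alphaP Rj else a m with hfdef
      have hfi : f i = a i + 1 := by simp [hfdef]
      have hfj : f j = a j + alphaP Rj := by simp [hfdef, hj]
      have hfm : ∀ m, m ≠ i → m ≠ j → f m = a m := by
        intro m h1 h2; simp [hfdef, h1, h2]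
      have hcon := congrFun hfix2 f
      rw [Matrix.mulVec_mulVec, kron_mul] at hcon
      rw [mulVec_ghz, mulVec_ghz] at hcon
      have hS0 : kron P' f (fun _ => 0) = 0 := by
        simp only [kron]
        apply Finset.prod_eq_zero (Finset.mem_univ i)
        apply pauli_zero (hP' i)
        simp only [hfi, zero_add]
        exact fin2_add_one_ne (a i)
      have hS1 : kron P' f (fun _ => 1) = 0 := by
        simp only [kron]
        apply Finset.prod_eq_zero (Finset.mem_univ k)
        apply pauli_zero (hP' k)
        simp only [hfm k hki hkj]
        exact fin2_ne_one_add (a k)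
      have hT1 : kron (fun m => P m * P' m) f (fun _ => 1) = 0 := by
        simp only [kron]
        apply Finset.prod_eq_zero (Finset.mem_univ k)
        rw [hPkeq, Matrix.one_mul]
        apply pauli_zero (hP' k)
        simp only [hfm k hki hkj]
        exact fin2_ne_one_add (a k)
      have hT0 : kron (fun m => P m * P' m) f (fun _ => 0) ≠ 0 := by
        simp only [kron]
        rw [Finset.prod_ne_zero_iff]
        intro m _
        rw [mul_pauli_apply (hP' m)]
        apply mul_ne_zero
        · by_cases hmi : m = i
          · subst hmi
            simp only [zero_add]
            rw [hPiR, Matrix.smul_apply]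
            apply mul_ne_zero (unit4_ne_zero hμi4)
            have h5 := pauli_ne_zero hRi (a m)
            rw [halphai] at h5
            rw [hfi]
            exact h5
          · by_cases hmj : m = j
            · subst hmj
              simp only [zero_add]
              rw [hPjR, Matrix.smul_apply]
              apply mul_ne_zero (unit4_ne_zero hμj4)
              rw [hfj]
              exact pauli_ne_zero hRj (a m)
            · have hVm : V m = 1 := by simp [hVdef, hmi, hmj]
              have hPm : P m = 1 := by
                show U m * V m * (U m)⁻¹ = 1
                rw [hVm, Matrix.mul_one]; exact hUr m
              rw [hPm, hfm m hmi hmj, zero_add]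
              show (1 : Matrix (Fin 2) (Fin 2) ℂ) (a m) (a m) ≠ 0
              simp [Matrix.one_apply]
        · exact pauli_ne_zero (hP' m) _
      rw [hS0, hS1, hT1] at hcon
      apply hT0
      have hc2 : (Real.sqrt 2 : ℂ)⁻¹ * kron (fun m => P m * P' m) f (fun _ => 0) = 0 := by
        linear_combination hcon
      exact (mul_eq_zero.mp hc2).resolve_left sqrt2C_ne
    rcases h4 with rfl | h | h | rfl
    · -- Ri = pI is impossible: trace
      exfalso
      have htr := congrArg Matrix.trace hRieq
      rw [Matrix.trace_mul_cycle, hUl i, Matrix.one_mul] at htr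
      have htrZ : Matrix.trace pZ = 0 := by
        simp [Matrix.trace, pZ, Fin.sum_univ_two]
      have htrI : Matrix.trace (μi • pI) = 2 * μi := by
        rw [Matrix.trace_smul, pI, Matrix.trace_one]
        simp [smul_eq_mul]; ring
      rw [htrZ, htrI] at htr
      have : μi = 0 := by linear_combination (-1/2 : ℂ) * htr
      exact unit4_ne_zero hμi4 this
    · exact (hXY (Or.inl h)).elim
    · exact (hXY (Or.inr h)).elim
    · rfl
  rw [hRiZ] at hRieq
  exact final_case (U i) (hUmem i) (hC i).2 hμi4 hRieq

end
end

section
/- Let n ≥ 2 and let i ≠ j be two nodes with 1 ≤ i, j ≤ n. Each of the three B-generators on the pair (i,j) — namely CZ_{i,n+i}·CZ_{j,n+j}, S_i·S_j, and S_{n+i}·S_{n+j} — is GHZ-preserving: for all GHZ-basis states u, v there exist GHZ-basis states u′, v′ and a unit complex scalar λ such that applying the generator to u⊗v yields λ(u′⊗v′). -/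
noncomputable section

open Classical in
/-- flipped bit string -/
def fl {n : ℕ} (a : Fin n → Fin 2) : Fin n → Fin 2 := fun i => a i + 1

/-- normal form of a GHZ basis state -/
def ghzSt {n : ℕ} (a : Fin n → Fin 2) (s : ℂ) : QState (Fin n) := fun f =>
  (Real.sqrt 2 : ℂ)⁻¹ *
    ((if f = a then 1 else 0) + s * (if f = fl a then 1 else 0))

lemma fl_ne {n : ℕ} (hn : 0 < n) (a : Fin n → Fin 2) : a ≠ fl a := by
  intro h
  have := congrFun h ⟨0, hn⟩
  simp only [fl] at this
  have h2 : ∀ z : Fin 2, z ≠ z + 1 := by decide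
  exact h2 _ this

lemma fl_apply_ne {n : ℕ} (a : Fin n → Fin 2) (i : Fin n) : a i ≠ fl a i := by
  have h2 : ∀ z : Fin 2, z ≠ z + 1 := by decide
  exact h2 _

/-- key computation: mulVec of a kron with support pattern a -/
lemma kron_mulVec_ghz {n : ℕ} (hn : 0 < n) (P : Fin n → Matrix (Fin 2) (Fin 2) ℂ)
    (a : Fin n → Fin 2) (c₀ s : ℂ)
    (sup0 : ∀ i, ∀ x, x ≠ a i → P i x 0 = 0)
    (sup1 : ∀ i, ∀ x, x ≠ a i + 1 → P i x 1 = 0)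
    (hc0 : (∏ i, P i (a i) 0) = c₀)
    (hc1 : (∏ i, P i (a i + 1) 1) = s * c₀) :
    (kron P).mulVec (ghz n) = c₀ • ghzSt a s := by
  have key : ∀ f, (kron P).mulVec (ghz n) f
      = (Real.sqrt 2 : ℂ)⁻¹ * ((∏ i, P i (f i) 0) + (∏ i, P i (f i) 1)) := by
    intro f
    simp only [Matrix.mulVec, dotProduct, ghz, mul_add, mul_ite, mul_one, mul_zero,
      Finset.sum_add_distrib, Finset.sum_ite_eq', Finset.mem_univ, if_true, kron]
    ring
  funext f
  rw [key]
  simp only [Pi.smul_apply, ghzSt, smul_eq_mul]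
  by_cases h0 : f = a
  · subst h0
    rw [hc0]
    have : (∏ i, P i (f i) 1) = 0 :=
      Finset.prod_eq_zero (Finset.mem_univ ⟨0, hn⟩) (sup1 _ _ (fl_apply_ne f _))
    rw [this, if_pos rfl, if_neg (fl_ne hn f)]
    ring
  · by_cases h1 : f = fl a
    · subst h1
      have : (∏ i, P i (fl a i) 0) = 0 :=
        Finset.prod_eq_zero (Finset.mem_univ ⟨0, hn⟩)
          (sup0 _ _ (Ne.symm (fl_apply_ne a _)))
      rw [this]
      have e1 : (∏ i, P i (fl a i) 1) = s * c₀ := by rw [← hc1]; rfl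
      rw [e1, if_neg (Ne.symm (fl_ne hn a)), if_pos rfl]
      ring
    · obtain ⟨k, hk⟩ := Function.ne_iff.mp h0
      obtain ⟨m, hm⟩ := Function.ne_iff.mp h1
      have e0 : (∏ i, P i (f i) 0) = 0 :=
        Finset.prod_eq_zero (Finset.mem_univ k) (sup0 _ _ hk)
      have e1 : (∏ i, P i (f i) 1) = 0 :=
        Finset.prod_eq_zero (Finset.mem_univ m) (sup1 _ _ hm)
      rw [e0, e1, if_neg h0, if_neg h1]
      ring
lemma pauli_mem_iff {A : Matrix (Fin 2) (Fin 2) ℂ} (h : A ∈ pauliSet) :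
    A = pI ∨ A = pX ∨ A = pY ∨ A = pZ := h

lemma pX_ne_pI : pX ≠ pI := by
  intro h
  have := congrFun (congrFun h 0) 1
  simp [pX, pI, Matrix.one_apply] at this
lemma pX_ne_pZ : pX ≠ pZ := by
  intro h
  have := congrFun (congrFun h 0) 1
  simp [pX, pZ] at this
lemma pY_ne_pI : pY ≠ pI := by
  intro h
  have := congrFun (congrFun h 1) 0
  simp [pY, pI, Matrix.one_apply, Complex.ext_iff] at this
lemma pY_ne_pZ : pY ≠ pZ := by
  intro h
  have := congrFun (congrFun h 1) 0
  simp [pY, pZ, Complex.ext_iff] at this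

open Classical in
/-- the flip-pattern of a Pauli string -/
def patt {n : ℕ} (P : Fin n → Matrix (Fin 2) (Fin 2) ℂ) : Fin n → Fin 2 := fun i =>
  if P i = pI ∨ P i = pZ then 0 else 1

lemma pauli_facts {A : Matrix (Fin 2) (Fin 2) ℂ} (h : A = pI ∨ A = pZ ∨ A = pX ∨ A = pY)
    (d : Fin 2) (hd : d = if A = pI ∨ A = pZ then 0 else 1) :
    (∀ x, x ≠ d → A x 0 = 0) ∧ (∀ x, x ≠ d + 1 → A x 1 = 0) ∧
      ‖A d 0‖ = 1 ∧
      ((A (d + 1) 1 = A d 0) ∨ (A (d + 1) 1 = - A d 0)) := by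
  rcases h with h | h | h | h <;> subst h
  · rw [if_pos (Or.inl rfl)] at hd; subst hd
    refine ⟨?_, ?_, ?_, ?_⟩
    · intro x hx; fin_cases x <;> simp_all [pI, Matrix.one_apply]
    · intro x hx; fin_cases x <;> simp_all [pI, Matrix.one_apply]
    · simp [pI, Matrix.one_apply]
    · left; simp [pI, Matrix.one_apply]
  · rw [if_pos (Or.inr rfl)] at hd; subst hd
    refine ⟨?_, ?_, ?_, ?_⟩
    · intro x hx; fin_cases x <;> simp_all [pZ]
    · intro x hx; fin_cases x <;> simp_all [pZ]
    · simp [pZ]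
    · right; simp [pZ]
  · rw [if_neg (by rintro (h | h); exact pX_ne_pI h; exact pX_ne_pZ h)] at hd; subst hd
    refine ⟨?_, ?_, ?_, ?_⟩
    · intro x hx; fin_cases x <;> simp_all [pX]
    · intro x hx; fin_cases x <;> simp_all [pX]
    · simp [pX]
    · left; rw [show (1+1 : Fin 2) = 0 from rfl]; norm_num [pX]
  · rw [if_neg (by rintro (h | h); exact pY_ne_pI h; exact pY_ne_pZ h)] at hd; subst hd
    refine ⟨?_, ?_, ?_, ?_⟩
    · intro x hx; fin_cases x <;> simp_all [pY]
    · intro x hx; fin_cases x <;> simp_all [pY]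
    · simp [pY]
    · right; rw [show (1+1 : Fin 2) = 0 from rfl]; norm_num [pY]
lemma ghzBasis_form {n : ℕ} (hn : 0 < n) {u : QState (Fin n)} (hu : IsGHZBasis u) :
    ∃ (a : Fin n → Fin 2) (c s : ℂ), ‖c‖ = 1 ∧ (s = 1 ∨ s = -1) ∧
      u = c • ghzSt a s := by
  obtain ⟨M, ⟨P, hP, rfl⟩, rfl⟩ := hu
  classical
  set a : Fin n → Fin 2 := patt P with ha
  have facts : ∀ i, (∀ x, x ≠ a i → P i x 0 = 0) ∧ (∀ x, x ≠ a i + 1 → P i x 1 = 0) ∧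
      ‖P i (a i) 0‖ = 1 ∧
      ((P i (a i + 1) 1 = P i (a i) 0) ∨ (P i (a i + 1) 1 = - P i (a i) 0)) := by
    intro i
    refine pauli_facts ?_ _ ?_
    · rcases pauli_mem_iff (hP i) with h | h | h | h
      · exact Or.inl h
      · exact Or.inr (Or.inr (Or.inl h))
      · exact Or.inr (Or.inr (Or.inr h))
      · exact Or.inr (Or.inl h)
    · rw [ha]; rfl
  choose sup0 sup1 habs heps using facts
  -- per-factor sign
  have hsign : ∀ i, ∃ ε : ℂ, (ε = 1 ∨ ε = -1) ∧ P i (a i + 1) 1 = ε * P i (a i) 0 := by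
    intro i
    rcases heps i with h | h
    · exact ⟨1, Or.inl rfl, by rw [h]; ring⟩
    · exact ⟨-1, Or.inr rfl, by rw [h]; ring⟩
  choose ε hε1 hε2 using hsign
  set c₀ : ℂ := ∏ i, P i (a i) 0 with hc₀
  set s : ℂ := ∏ i, ε i with hs
  have hsval : s = 1 ∨ s = -1 := by
    rw [hs]
    refine Finset.prod_induction ε (fun x => x = 1 ∨ x = -1) ?_ (Or.inl rfl) fun i _ => hε1 i
    rintro x y (rfl | rfl) (rfl | rfl) <;> norm_num
  have habs0 : ‖c₀‖ = 1 := by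
    rw [hc₀, norm_prod]
    exact Finset.prod_eq_one fun i _ => habs i
  refine ⟨a, c₀, s, habs0, hsval, ?_⟩
  refine kron_mulVec_ghz hn P a c₀ s sup0 sup1 rfl ?_
  rw [Finset.prod_congr rfl fun i _ => hε2 i, Finset.prod_mul_distrib]
lemma fin2_cases : ∀ z : Fin 2, z = 0 ∨ z = 1 := by decide

lemma ghzBasis_of_form {n : ℕ} (hn : 0 < n) (a : Fin n → Fin 2) (s : ℂ)
    (hs : s = 1 ∨ s = -1) :
    ∃ c : ℂ, ‖c‖ = 1 ∧ IsGHZBasis (c • ghzSt a s) := by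
  classical
  set k : Fin n := ⟨0, hn⟩ with hk
  set P : Fin n → Matrix (Fin 2) (Fin 2) ℂ := fun i =>
    if i = k ∧ s = -1 then (if a i = 0 then pZ else pY)
    else (if a i = 0 then pI else pX) with hP
  have hPmem : ∀ i, P i ∈ pauliSet := by
    intro i
    rw [hP]
    dsimp only
    split_ifs <;> simp [pauliSet]
  have facts : ∀ i, (∀ x, x ≠ a i → P i x 0 = 0) ∧ (∀ x, x ≠ a i + 1 → P i x 1 = 0) ∧
      ‖P i (a i) 0‖ = 1 ∧
      ((P i (a i + 1) 1 = P i (a i) 0) ∨ (P i (a i + 1) 1 = - P i (a i) 0)) := by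
    intro i
    by_cases hks : i = k ∧ s = -1
    · rcases fin2_cases (a i) with h | h
      · rw [hP]; dsimp only; rw [if_pos hks, h, if_pos rfl]
        exact pauli_facts (Or.inr (Or.inl rfl)) 0 (by rw [if_pos (Or.inr rfl)])
      · rw [hP]; dsimp only; rw [if_pos hks, h, if_neg one_ne_zero]
        exact pauli_facts (Or.inr (Or.inr (Or.inr rfl))) 1
          (by rw [if_neg (by rintro (h | h); exact pY_ne_pI h; exact pY_ne_pZ h)])
    · rcases fin2_cases (a i) with h | h
      · rw [hP]; dsimp only; rw [if_neg hks, h, if_pos rfl]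
        exact pauli_facts (Or.inl rfl) 0 (by rw [if_pos (Or.inl rfl)])
      · rw [hP]; dsimp only; rw [if_neg hks, h, if_neg one_ne_zero]
        exact pauli_facts (Or.inr (Or.inr (Or.inl rfl))) 1
          (by rw [if_neg (by rintro (h | h); exact pX_ne_pI h; exact pX_ne_pZ h)])
  choose sup0 sup1 habs _ using facts
  have hε2 : ∀ i, P i (a i + 1) 1 = (if i = k ∧ s = -1 then (-1:ℂ) else 1) * P i (a i) 0 := by
    intro i
    by_cases hks : i = k ∧ s = -1
    · rcases fin2_cases (a i) with h | h
      · rw [hP]; dsimp only; rw [if_pos hks, h, if_pos rfl, if_pos hks]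
        norm_num [pZ, show ((0:Fin 2)+1) = 1 from rfl]
      · rw [hP]; dsimp only; rw [if_pos hks, h, if_neg one_ne_zero, if_pos hks]
        rw [show ((1:Fin 2)+1) = 0 from rfl]
        norm_num [pY]
    · rcases fin2_cases (a i) with h | h
      · rw [hP]; dsimp only; rw [if_neg hks, h, if_pos rfl, if_neg hks]
        norm_num [pI, Matrix.one_apply, show ((0:Fin 2)+1) = 1 from rfl]
      · rw [hP]; dsimp only; rw [if_neg hks, h, if_neg one_ne_zero, if_neg hks]
        rw [show ((1:Fin 2)+1) = 0 from rfl]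
        norm_num [pX]
  set c₀ : ℂ := ∏ i, P i (a i) 0 with hc₀
  have habs0 : ‖c₀‖ = 1 := by
    rw [hc₀, norm_prod]
    exact Finset.prod_eq_one fun i _ => habs i
  have hc1 : (∏ i, P i (a i + 1) 1) = s * c₀ := by
    rw [Finset.prod_congr rfl fun i _ => hε2 i, Finset.prod_mul_distrib]
    congr 1
    rcases hs with rfl | rfl
    · norm_num
    · norm_num
  refine ⟨c₀, habs0, kron P, ⟨P, hPmem, rfl⟩, ?_⟩
  exact (kron_mulVec_ghz hn P a c₀ s sup0 sup1 rfl hc1).symm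
lemma tensor2_smul {n : ℕ} (c c' : ℂ) (u v : QState (Fin n)) :
    tensor2 (c • u) (c' • v) = (c * c') • tensor2 u v := by
  funext f
  simp only [tensor2, Pi.smul_apply, smul_eq_mul]
  ring

lemma diag_tensor {n : ℕ} (hn : 0 < n) (δ : (Fin n ⊕ Fin n → Fin 2) → ℂ)
    (a b : Fin n → Fin 2) (s t μ α β : ℂ)
    (h00 : δ (Sum.elim a b) = μ)
    (h01 : δ (Sum.elim a (fl b)) = μ * β)
    (h10 : δ (Sum.elim (fl a) b) = μ * α)
    (h11 : δ (Sum.elim (fl a) (fl b)) = μ * α * β) :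
    (Matrix.diagonal δ).mulVec (tensor2 (ghzSt a s) (ghzSt b t))
      = μ • tensor2 (ghzSt a (α * s)) (ghzSt b (β * t)) := by
  funext f
  obtain ⟨x, y, rfl⟩ : ∃ x y, f = Sum.elim x y :=
    ⟨fun i => f (Sum.inl i), fun i => f (Sum.inr i), by funext k; cases k <;> rfl⟩
  rw [Matrix.mulVec_diagonal]
  have hx : (fun i => Sum.elim x y (Sum.inl i)) = x := rfl
  have hy : (fun i => Sum.elim x y (Sum.inr i)) = y := rfl
  simp only [Pi.smul_apply, smul_eq_mul, tensor2, hx, hy, ghzSt]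
  by_cases h0 : x = a
  · subst h0
    rw [if_pos rfl, if_neg (fl_ne hn x)]
    by_cases h2 : y = b
    · subst h2
      rw [if_pos rfl, if_neg (fl_ne hn y), h00]
      ring
    · by_cases h3 : y = fl b
      · subst h3
        rw [if_neg (Ne.symm (fl_ne hn b)), if_pos rfl, h01]
        ring
      · rw [if_neg h2, if_neg h3]
        ring
  · by_cases h1 : x = fl a
    · subst h1
      rw [if_neg (Ne.symm (fl_ne hn a)), if_pos rfl]
      by_cases h2 : y = b
      · subst h2
        rw [if_pos rfl, if_neg (fl_ne hn y), h10]
        ring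
      · by_cases h3 : y = fl b
        · subst h3
          rw [if_neg (Ne.symm (fl_ne hn b)), if_pos rfl, h11]
          ring
        · rw [if_neg h2, if_neg h3]
          ring
    · rw [if_neg h0, if_neg h1]
      ring
lemma preserving_of_diag {n : ℕ} (hn : 0 < n) (δ : (Fin n ⊕ Fin n → Fin 2) → ℂ)
    (h : ∀ a b : Fin n → Fin 2, ∃ μ α β : ℂ, ‖μ‖ = 1 ∧
        (α = 1 ∨ α = -1) ∧ (β = 1 ∨ β = -1) ∧
        δ (Sum.elim a b) = μ ∧ δ (Sum.elim a (fl b)) = μ * β ∧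
        δ (Sum.elim (fl a) b) = μ * α ∧ δ (Sum.elim (fl a) (fl b)) = μ * α * β) :
    GHZPreserving2 (Matrix.diagonal δ) := by
  intro u v hu hv
  obtain ⟨a, c, s, hc, hs, rfl⟩ := ghzBasis_form hn hu
  obtain ⟨b, c', t, hc', ht, rfl⟩ := ghzBasis_form hn hv
  obtain ⟨μ, α, β, hμ, hα, hβ, h00, h01, h10, h11⟩ := h a b
  have hαs : α * s = 1 ∨ α * s = -1 := by
    rcases hα with rfl | rfl <;> rcases hs with rfl | rfl <;> norm_num
  have hβt : β * t = 1 ∨ β * t = -1 := by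
    rcases hβ with rfl | rfl <;> rcases ht with rfl | rfl <;> norm_num
  obtain ⟨d, hd, hd2⟩ := ghzBasis_of_form hn a (α * s) hαs
  obtain ⟨d', hd', hd2'⟩ := ghzBasis_of_form hn b (β * t) hβt
  refine ⟨d • ghzSt a (α * s), d' • ghzSt b (β * t), hd2, hd2',
    c * c' * μ * (starRingEnd ℂ d) * (starRingEnd ℂ d'), ?_, ?_⟩
  · simp only [norm_mul, hμ, hc, hc', map_one, Complex.norm_conj, hd, hd', one_mul, mul_one]
  · rw [tensor2_smul, Matrix.mulVec_smul, diag_tensor hn δ a b s t μ α β h00 h01 h10 h11,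
      tensor2_smul, smul_smul, smul_smul]
    congr 1
    have e1 : (starRingEnd ℂ d) * d = 1 := by
      rw [mul_comm, Complex.mul_conj]
      norm_cast
      rw [Complex.normSq_eq_norm_sq, hd]; norm_num
    have e2 : (starRingEnd ℂ d') * d' = 1 := by
      rw [mul_comm, Complex.mul_conj]
      norm_cast
      rw [Complex.normSq_eq_norm_sq, hd']; norm_num
    linear_combination (-(c * c' * μ * ((starRingEnd ℂ d') * d'))) * e1 - (c * c' * μ) * e2
def czE (x y : Fin 2) : ℂ := if x = 1 ∧ y = 1 then -1 else 1
def sE (x : Fin 2) : ℂ := if x = 1 then Complex.I else 1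

lemma fin2_add : ((0:Fin 2)+1) = 1 ∧ ((1:Fin 2)+1) = 0 := by decide

lemma czsign (x1 y1 x2 y2 : Fin 2) : ∃ μ α β : ℂ, ‖μ‖ = 1 ∧
    (α = 1 ∨ α = -1) ∧ (β = 1 ∨ β = -1) ∧
    czE x1 y1 * czE x2 y2 = μ ∧
    czE x1 (y1+1) * czE x2 (y2+1) = μ * β ∧
    czE (x1+1) y1 * czE (x2+1) y2 = μ * α ∧
    czE (x1+1) (y1+1) * czE (x2+1) (y2+1) = μ * α * β := by
  refine ⟨czE x1 y1 * czE x2 y2,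
    (czE x1 y1 * czE x2 y2) * (czE (x1+1) y1 * czE (x2+1) y2),
    (czE x1 y1 * czE x2 y2) * (czE x1 (y1+1) * czE x2 (y2+1)),
    ?_, ?_, ?_, rfl, ?_, ?_, ?_⟩ <;>
  rcases fin2_cases x1 with rfl | rfl <;> rcases fin2_cases y1 with rfl | rfl <;>
  rcases fin2_cases x2 with rfl | rfl <;> rcases fin2_cases y2 with rfl | rfl <;>
  norm_num [czE, show ((0:Fin 2)+1) = 1 from rfl, show ((1:Fin 2)+1) = 0 from rfl, show ¬((2:Fin 2) = 1) from by decide, show ((2:Fin 2) = 0) from by decide]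

lemma ssign (x1 x2 : Fin 2) : ∃ μ α : ℂ, ‖μ‖ = 1 ∧
    (α = 1 ∨ α = -1) ∧ sE x1 * sE x2 = μ ∧ sE (x1+1) * sE (x2+1) = μ * α := by
  refine ⟨sE x1 * sE x2, (starRingEnd ℂ (sE x1 * sE x2)) * (sE (x1+1) * sE (x2+1)),
    ?_, ?_, rfl, ?_⟩ <;>
  rcases fin2_cases x1 with rfl | rfl <;> rcases fin2_cases x2 with rfl | rfl <;>
  norm_num [sE, Complex.ext_iff, show ((0:Fin 2)+1) = 1 from rfl, show ((1:Fin 2)+1) = 0 from rfl, show ¬((2:Fin 2) = 1) from by decide, show ((2:Fin 2) = 0) from by decide]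
/-- STATEMENT 4: each of the three B-generators on a pair of distinct nodes `i ≠ j`
is GHZ-preserving on two copies of the `n`-qubit GHZ state. -/
theorem stmt4 (n : ℕ) (hn : 2 ≤ n) (i j : Fin n) (hij : i ≠ j) :
    GHZPreserving2 (bCZ i j) ∧ GHZPreserving2 (bS₁ i j) ∧ GHZPreserving2 (bS₂ i j) := by
  have hn0 : 0 < n := by omega
  refine ⟨?_, ?_, ?_⟩
  · have hd : bCZ i j = Matrix.diagonal
        (fun f => czE (f (Sum.inl i)) (f (Sum.inr i)) * czE (f (Sum.inl j)) (f (Sum.inr j))) := by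
      rw [bCZ, czMat, czMat, Matrix.diagonal_mul_diagonal]; rfl
    rw [hd]
    refine preserving_of_diag hn0 _ fun a b => ?_
    obtain ⟨μ, α, β, h1, h2, h3, h4, h5, h6, h7⟩ := czsign (a i) (b i) (a j) (b j)
    exact ⟨μ, α, β, h1, h2, h3, h4, h5, h6, h7⟩
  · have hd : bS₁ i j = Matrix.diagonal
        (fun f => sE (f (Sum.inl i)) * sE (f (Sum.inl j))) := by
      rw [bS₁, sMat, sMat, Matrix.diagonal_mul_diagonal]; rfl
    rw [hd]
    refine preserving_of_diag hn0 _ fun a b => ?_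
    obtain ⟨μ, α, h1, h2, h3, h4⟩ := ssign (a i) (a j)
    exact ⟨μ, α, 1, h1, h2, Or.inl rfl, h3, by rw [mul_one]; exact h3, h4,
      by rw [mul_one]; exact h4⟩
  · have hd : bS₂ i j = Matrix.diagonal
        (fun f => sE (f (Sum.inr i)) * sE (f (Sum.inr j))) := by
      rw [bS₂, sMat, sMat, Matrix.diagonal_mul_diagonal]; rfl
    rw [hd]
    refine preserving_of_diag hn0 _ fun a b => ?_
    obtain ⟨μ, β, h1, h2, h3, h4⟩ := ssign (b i) (b j)
    exact ⟨μ, 1, β, h1, Or.inl rfl, h2, h3, h4, by rw [mul_one]; exact h3,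
      by rw [mul_one]; exact h4⟩

end
end

section
/- Let n ≥ 2. Each of the two H-generators C₁ = ∏_{i=1}^n CNOT_{i→n+i} and C₂ = ∏_{i=1}^n CNOT_{n+i→i} (the same CNOT applied homogeneously at every node of the two-copy system) is GHZ-preserving: for all GHZ-basis states u, v there exist GHZ-basis states u′, v′ and a unit complex scalar λ such that applying the generator to u⊗v yields λ(u′⊗v′). -/
noncomputable section

-- auxiliary development, to be spliced before `stmt8`
namespace Stmt8Aux

variable {n : ℕ}

/-- Canonical GHZ-like state `(|a⟩ + ε|ā⟩)/√2`. -/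
def wSt (a : Fin n → Fin 2) (ε : ℂ) : QState (Fin n) := fun f =>
  (Real.sqrt 2 : ℂ)⁻¹ *
    ((if f = a then 1 else 0) + ε * (if f = (fun i => a i + 1) then 1 else 0))

lemma comp_ne (hn : 0 < n) (a : Fin n → Fin 2) : a ≠ (fun i => a i + 1) := by
  intro h
  have h0 := congrFun h ⟨0, hn⟩
  have hx : ∀ x : Fin 2, x ≠ x + 1 := by decide
  exact hx _ h0

lemma prod_indicator (f s : Fin n → Fin 2) :
    (∏ i, (if f i = s i then (1 : ℂ) else 0)) = if f = s then 1 else 0 := by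
  by_cases h : f = s
  · subst h; simp
  · rw [if_neg h]
    obtain ⟨i, hi⟩ := Function.ne_iff.mp h
    exact Finset.prod_eq_zero (Finset.mem_univ i) (by simp [hi])

lemma realize (s : Fin 2) (ε : ℂ) (hε : ε * ε = 1) :
    ∃ P ∈ pauliSet, ∃ φ : ℂ, ‖φ‖ = 1 ∧
      (∀ f, P f 0 = φ * (if f = s then 1 else 0)) ∧
      (∀ f, P f 1 = ε * φ * (if f = s + 1 then 1 else 0)) := by
  rcases mul_self_eq_one_iff.mp hε with rfl | rfl <;> fin_cases s
  · refine ⟨pI, by simp [pauliSet], 1, by simp, ?_, ?_⟩ <;>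
      (intro f; fin_cases f <;> simp [pI, Matrix.one_apply])
  · refine ⟨pX, by simp [pauliSet], 1, by simp, ?_, ?_⟩ <;>
      (intro f; fin_cases f <;> simp [pX])
  · refine ⟨pZ, by simp [pauliSet], 1, by simp, ?_, ?_⟩ <;>
      (intro f; fin_cases f <;> simp [pZ])
  · refine ⟨pY, by simp [pauliSet], Complex.I, by simp, ?_, ?_⟩ <;>
      (intro f; fin_cases f <;> simp [pY])

lemma pauli_data {P : Matrix (Fin 2) (Fin 2) ℂ} (hP : P ∈ pauliSet) :
    ∃ s : Fin 2, ∃ φ ε : ℂ, ‖φ‖ = 1 ∧ ε * ε = 1 ∧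
      (∀ f, P f 0 = φ * (if f = s then 1 else 0)) ∧
      (∀ f, P f 1 = ε * φ * (if f = s + 1 then 1 else 0)) := by
  simp only [pauliSet, Set.mem_insert_iff, Set.mem_singleton_iff] at hP
  rcases hP with rfl | rfl | rfl | rfl
  · exact ⟨0, 1, 1, by simp, by ring,
      by intro f; fin_cases f <;> simp [pI, Matrix.one_apply],
      by intro f; fin_cases f <;> simp [pI, Matrix.one_apply]⟩
  · exact ⟨1, 1, 1, by simp, by ring,
      by intro f; fin_cases f <;> simp [pX],
      by intro f; fin_cases f <;> simp [pX]⟩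
  · exact ⟨1, Complex.I, -1, by simp, by ring,
      by intro f; fin_cases f <;> simp [pY],
      by intro f; fin_cases f <;> simp [pY]⟩
  · exact ⟨0, 1, -1, by simp, by ring,
      by intro f; fin_cases f <;> simp [pZ],
      by intro f; fin_cases f <;> simp [pZ]⟩

lemma kron_mulVec_ghz (P : Fin n → Matrix (Fin 2) (Fin 2) ℂ)
    (s : Fin n → Fin 2) (φ ε : Fin n → ℂ)
    (h0 : ∀ i f, P i f 0 = φ i * (if f = s i then 1 else 0))
    (h1 : ∀ i f, P i f 1 = ε i * φ i * (if f = s i + 1 then 1 else 0)) :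
    (kron P).mulVec (ghz n) = (∏ i, φ i) • wSt s (∏ i, ε i) := by
  funext f
  simp only [Matrix.mulVec, dotProduct, kron, ghz, Pi.smul_apply, smul_eq_mul, wSt]
  have hstep : ∀ g : Fin n → Fin 2,
      (∏ i, P i (f i) (g i)) *
        ((Real.sqrt 2 : ℂ)⁻¹ *
          ((if g = (fun _ => (0 : Fin 2)) then 1 else 0) +
           (if g = (fun _ => (1 : Fin 2)) then 1 else 0)))
      = (Real.sqrt 2 : ℂ)⁻¹ *
          ((if g = (fun _ => (0 : Fin 2)) then ∏ i, P i (f i) (g i) else 0)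
           + (if g = (fun _ => (1 : Fin 2)) then ∏ i, P i (f i) (g i) else 0)) := by
    intro g; split_ifs <;> ring
  rw [Finset.sum_congr rfl fun g _ => hstep g, ← Finset.mul_sum,
    Finset.sum_add_distrib, Finset.sum_ite_eq', Finset.sum_ite_eq']
  simp only [Finset.mem_univ, if_true]
  have e0 : (∏ i, P i (f i) ((fun _ => (0 : Fin 2)) i))
      = (∏ i, φ i) * (if f = s then 1 else 0) := by
    simp only [h0]
    rw [Finset.prod_mul_distrib, prod_indicator]
  have e1 : (∏ i, P i (f i) ((fun _ => (1 : Fin 2)) i))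
      = ((∏ i, ε i) * (∏ i, φ i)) * (if f = (fun i => s i + 1) then 1 else 0) := by
    simp only [h1]
    rw [Finset.prod_mul_distrib, Finset.prod_mul_distrib, prod_indicator f (fun i => s i + 1)]
  rw [e0, e1]
  ring

lemma ghz_repr {v : QState (Fin n)} (hv : IsGHZBasis v) :
    ∃ a : Fin n → Fin 2, ∃ φ ε : ℂ, ‖φ‖ = 1 ∧ ε * ε = 1 ∧ v = φ • wSt a ε := by
  obtain ⟨M, ⟨P, hP, rfl⟩, rfl⟩ := hv
  choose s φ ε hφ hε h0 h1 using fun i => pauli_data (hP i)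
  refine ⟨s, ∏ i, φ i, ∏ i, ε i, ?_, ?_, kron_mulVec_ghz P s φ ε h0 h1⟩
  · rw [norm_prod]; simp [hφ]
  · rw [← Finset.prod_mul_distrib]; simp [hε]

lemma ghz_exists (hn : 0 < n) (a : Fin n → Fin 2) (ε : ℂ) (hε : ε * ε = 1) :
    ∃ v : QState (Fin n), IsGHZBasis v ∧ ∃ μ : ℂ, ‖μ‖ = 1 ∧ wSt a ε = μ • v := by
  have hεi : ∀ i : Fin n, (if i = (⟨0, hn⟩ : Fin n) then ε else 1) *
      (if i = (⟨0, hn⟩ : Fin n) then ε else 1) = 1 := by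
    intro i; split_ifs <;> simp [hε]
  choose P hPmem φ hφ h0 h1 using fun i => realize (a i) _ (hεi i)
  have hprod : ‖∏ i, φ i‖ = 1 := by rw [norm_prod]; simp [hφ]
  refine ⟨(kron P).mulVec (ghz n), ⟨kron P, ⟨P, hPmem, rfl⟩, rfl⟩, (∏ i, φ i)⁻¹,
    by rw [norm_inv, hprod]; norm_num, ?_⟩
  rw [kron_mulVec_ghz P a φ _ h0 h1, Finset.prod_ite_eq' Finset.univ (⟨0, hn⟩ : Fin n) fun _ => ε]
  simp only [Finset.mem_univ, if_true]
  rw [smul_smul, inv_mul_cancel₀ (by intro h; rw [h] at hprod; simp at hprod), one_smul]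

lemma tensor2_smul (x y : ℂ) (u v : QState (Fin n)) :
    tensor2 (x • u) (y • v) = (x * y) • tensor2 u v := by
  funext f
  simp only [tensor2, Pi.smul_apply, smul_eq_mul]
  ring

lemma hC₁_mulVec (v : QState (Fin n ⊕ Fin n)) :
    (hC₁ n).mulVec v = fun f =>
      v (Sum.elim (fun i => f (Sum.inl i)) (fun i => f (Sum.inr i) + f (Sum.inl i))) := by
  funext f
  simp only [Matrix.mulVec, dotProduct, hC₁]
  have key : ∀ x y : Fin 2, x + y + y = x := by decide
  have hiff : ∀ g : Fin n ⊕ Fin n → Fin 2,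
      (f = Sum.elim (fun i => g (Sum.inl i)) (fun i => g (Sum.inr i) + g (Sum.inl i))) ↔
      g = Sum.elim (fun i => f (Sum.inl i)) (fun i => f (Sum.inr i) + f (Sum.inl i)) := by
    intro g
    constructor
    · rintro rfl; funext x; cases x <;> simp [key]
    · rintro rfl; funext x; cases x <;> simp [key]
  simp only [hiff, ite_mul, one_mul, zero_mul, Finset.sum_ite_eq', Finset.mem_univ, if_true]

lemma hC₂_mulVec (v : QState (Fin n ⊕ Fin n)) :
    (hC₂ n).mulVec v = fun f =>
      v (Sum.elim (fun i => f (Sum.inl i) + f (Sum.inr i)) (fun i => f (Sum.inr i))) := by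
  funext f
  simp only [Matrix.mulVec, dotProduct, hC₂]
  have key : ∀ x y : Fin 2, x + y + y = x := by decide
  have hiff : ∀ g : Fin n ⊕ Fin n → Fin 2,
      (f = Sum.elim (fun i => g (Sum.inl i) + g (Sum.inr i)) (fun i => g (Sum.inr i))) ↔
      g = Sum.elim (fun i => f (Sum.inl i) + f (Sum.inr i)) (fun i => f (Sum.inr i)) := by
    intro g
    constructor
    · rintro rfl; funext x; cases x <;> simp [key]
    · rintro rfl; funext x; cases x <;> simp [key]
  simp only [hiff, ite_mul, one_mul, zero_mul, Finset.sum_ite_eq', Finset.mem_univ, if_true]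

end Stmt8Aux

namespace Stmt8Aux

lemma hC₁_action {n : ℕ} (hn : 0 < n) (a b : Fin n → Fin 2) (ε η : ℂ) (hη : η * η = 1) :
    (hC₁ n).mulVec (tensor2 (wSt a ε) (wSt b η)) =
      tensor2 (wSt a (ε * η)) (wSt (fun i => a i + b i) η) := by
  funext f
  rw [hC₁_mulVec]
  simp only [tensor2, Sum.elim_inl, Sum.elim_inr]; simp only [wSt]
  by_cases h1 : (fun i => f (Sum.inl i)) = a
  · have key1 : ((fun i => f (Sum.inr i) + f (Sum.inl i)) = b) ↔
        ((fun i => f (Sum.inr i)) = fun i => a i + b i) := by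
      have pt : ∀ x y z : Fin 2, (x + y = z) ↔ (x = y + z) := by decide
      rw [funext_iff, funext_iff]
      exact forall_congr' fun i => by rw [congrFun h1 i]; exact pt _ _ _
    have key2 : ((fun i => f (Sum.inr i) + f (Sum.inl i)) = fun i => b i + 1) ↔
        ((fun i => f (Sum.inr i)) = fun i => a i + b i + 1) := by
      have pt : ∀ x y z : Fin 2, (x + y = z + 1) ↔ (x = y + z + 1) := by decide
      rw [funext_iff, funext_iff]
      exact forall_congr' fun i => by rw [congrFun h1 i]; exact pt _ _ _
    have h1' : ¬((fun i => f (Sum.inl i)) = fun i => a i + 1) := by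
      rw [h1]; exact comp_ne hn a
    rw [if_pos h1, if_neg h1']
    simp only [key1, key2]
    ring
  · by_cases h2 : (fun i => f (Sum.inl i)) = fun i => a i + 1
    · have key1 : ((fun i => f (Sum.inr i) + f (Sum.inl i)) = b) ↔
          ((fun i => f (Sum.inr i)) = fun i => a i + b i + 1) := by
        have pt : ∀ x y z : Fin 2, (x + (y + 1) = z) ↔ (x = y + z + 1) := by decide
        rw [funext_iff, funext_iff]
        exact forall_congr' fun i => by rw [congrFun h2 i]; exact pt _ _ _
      have key2 : ((fun i => f (Sum.inr i) + f (Sum.inl i)) = fun i => b i + 1) ↔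
          ((fun i => f (Sum.inr i)) = fun i => a i + b i) := by
        have pt : ∀ x y z : Fin 2, (x + (y + 1) = z + 1) ↔ (x = y + z) := by decide
        rw [funext_iff, funext_iff]
        exact forall_congr' fun i => by rw [congrFun h2 i]; exact pt _ _ _
      rw [if_neg h1, if_pos h2]
      simp only [key1, key2]
      by_cases hc : (fun i => f (Sum.inr i)) = fun i => a i + b i
      · have hc' : ¬((fun i => f (Sum.inr i)) = fun i => a i + b i + 1) := by
          rw [hc]; exact comp_ne hn _
        rw [if_pos hc, if_neg hc']; ring
      · by_cases hc' : (fun i => f (Sum.inr i)) = fun i => a i + b i + 1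
        · rw [if_neg hc, if_pos hc']
          linear_combination (-((Real.sqrt 2 : ℂ)⁻¹ * (Real.sqrt 2 : ℂ)⁻¹ * ε)) * hη
        · rw [if_neg hc, if_neg hc']; ring
    · rw [if_neg h1, if_neg h2]; ring

lemma hC₂_action {n : ℕ} (hn : 0 < n) (a b : Fin n → Fin 2) (ε η : ℂ) (hε : ε * ε = 1) :
    (hC₂ n).mulVec (tensor2 (wSt a ε) (wSt b η)) =
      tensor2 (wSt (fun i => a i + b i) ε) (wSt b (ε * η)) := by
  funext f
  rw [hC₂_mulVec]
  simp only [tensor2, Sum.elim_inl, Sum.elim_inr]; simp only [wSt]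
  by_cases h1 : (fun i => f (Sum.inr i)) = b
  · have key1 : ((fun i => f (Sum.inl i) + f (Sum.inr i)) = a) ↔
        ((fun i => f (Sum.inl i)) = fun i => a i + b i) := by
      have pt : ∀ x y z : Fin 2, (x + y = z) ↔ (x = z + y) := by decide
      rw [funext_iff, funext_iff]
      exact forall_congr' fun i => by rw [congrFun h1 i]; exact pt _ _ _
    have key2 : ((fun i => f (Sum.inl i) + f (Sum.inr i)) = fun i => a i + 1) ↔
        ((fun i => f (Sum.inl i)) = fun i => a i + b i + 1) := by
      have pt : ∀ x y z : Fin 2, (x + y = z + 1) ↔ (x = z + y + 1) := by decide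
      rw [funext_iff, funext_iff]
      exact forall_congr' fun i => by rw [congrFun h1 i]; exact pt _ _ _
    have h1' : ¬((fun i => f (Sum.inr i)) = fun i => b i + 1) := by
      rw [h1]; exact comp_ne hn b
    rw [if_pos h1, if_neg h1']
    simp only [key1, key2]
    ring
  · by_cases h2 : (fun i => f (Sum.inr i)) = fun i => b i + 1
    · have key1 : ((fun i => f (Sum.inl i) + f (Sum.inr i)) = a) ↔
          ((fun i => f (Sum.inl i)) = fun i => a i + b i + 1) := by
        have pt : ∀ x y z : Fin 2, (x + (y + 1) = z) ↔ (x = z + y + 1) := by decide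
        rw [funext_iff, funext_iff]
        exact forall_congr' fun i => by rw [congrFun h2 i]; exact pt _ _ _
      have key2 : ((fun i => f (Sum.inl i) + f (Sum.inr i)) = fun i => a i + 1) ↔
          ((fun i => f (Sum.inl i)) = fun i => a i + b i) := by
        have pt : ∀ x y z : Fin 2, (x + (y + 1) = z + 1) ↔ (x = z + y) := by decide
        rw [funext_iff, funext_iff]
        exact forall_congr' fun i => by rw [congrFun h2 i]; exact pt _ _ _
      rw [if_neg h1, if_pos h2]
      simp only [key1, key2]
      by_cases hc : (fun i => f (Sum.inl i)) = fun i => a i + b i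
      · have hc' : ¬((fun i => f (Sum.inl i)) = fun i => a i + b i + 1) := by
          rw [hc]; exact comp_ne hn _
        rw [if_pos hc, if_neg hc']; ring
      · by_cases hc' : (fun i => f (Sum.inl i)) = fun i => a i + b i + 1
        · rw [if_neg hc, if_pos hc']
          linear_combination (-((Real.sqrt 2 : ℂ)⁻¹ * (Real.sqrt 2 : ℂ)⁻¹ * η)) * hε
        · rw [if_neg hc, if_neg hc']; ring
    · rw [if_neg h1, if_neg h2]; ring

end Stmt8Aux

/-- STATEMENT 8: both H-generators (homogeneous CNOTs across all nodes of the
two-copy system) are GHZ-preserving. -/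
theorem stmt8 (n : ℕ) (hn : 2 ≤ n) :
    GHZPreserving2 (hC₁ n) ∧ GHZPreserving2 (hC₂ n) := by
  have hn0 : 0 < n := by omega
  constructor
  · intro u v hu hv
    obtain ⟨a, φa, εa, hφa, hεa, rfl⟩ := Stmt8Aux.ghz_repr hu
    obtain ⟨b, φb, εb, hφb, hεb, rfl⟩ := Stmt8Aux.ghz_repr hv
    obtain ⟨u', hu', μ₁, hμ₁, hw1⟩ := Stmt8Aux.ghz_exists hn0 a (εa * εb)
      (by rw [mul_mul_mul_comm, hεa, hεb, one_mul])
    obtain ⟨v', hv', μ₂, hμ₂, hw2⟩ := Stmt8Aux.ghz_exists hn0 (fun i => a i + b i) εb hεb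
    refine ⟨u', v', hu', hv', φa * φb * (μ₁ * μ₂), by simp [hφa, hφb, hμ₁, hμ₂], ?_⟩
    rw [Stmt8Aux.tensor2_smul, Matrix.mulVec_smul,
      Stmt8Aux.hC₁_action hn0 a b εa εb hεb, hw1, hw2, Stmt8Aux.tensor2_smul, smul_smul]
  · intro u v hu hv
    obtain ⟨a, φa, εa, hφa, hεa, rfl⟩ := Stmt8Aux.ghz_repr hu
    obtain ⟨b, φb, εb, hφb, hεb, rfl⟩ := Stmt8Aux.ghz_repr hv
    obtain ⟨u', hu', μ₁, hμ₁, hw1⟩ := Stmt8Aux.ghz_exists hn0 (fun i => a i + b i) εa hεa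
    obtain ⟨v', hv', μ₂, hμ₂, hw2⟩ := Stmt8Aux.ghz_exists hn0 b (εa * εb)
      (by rw [mul_mul_mul_comm, hεa, hεb, one_mul])
    refine ⟨u', v', hu', hv', φa * φb * (μ₁ * μ₂), by simp [hφa, hφb, hμ₁, hμ₂], ?_⟩
    rw [Stmt8Aux.tensor2_smul, Matrix.mulVec_smul,
      Stmt8Aux.hC₂_action hn0 a b εa εb hεa, hw1, hw2, Stmt8Aux.tensor2_smul, smul_smul]

end
end
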